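/- For every natural number W there exists ℓ₀ ∈ ℕ such that for all ℓ ≥ ℓ₀: every bipartite graph A with k(A) ≤ 2ℓ + W and e(A) ≥ ℓ² contains a subgraph (a subset of its vertices together with all edges of A between them) that is almost ℓ-complete. -/

import Mathlib

noncomputable section

/-- A bipartite graph: two disjoint finite vertex sets `L`, `R`
and a set of edges `E ⊆ L × R`. -/
structure BipGraph (V : Type) [DecidableEq V] where
  L : Finset V
  R : Finset V
  disj : Disjoint L R
  E : Finset (V × V)
  E_sub : E ⊆ L ×ˢ R

namespace BipGraph

variable {V : Type} [DecidableEq V]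

/-- the vertex set -/
def verts (A : BipGraph V) : Finset V := A.L ∪ A.R

/-- `v A` is the number of vertices of `A` -/
def v (A : BipGraph V) : ℕ := A.verts.card

/-- `e A` is the number of edges of `A` -/
def e (A : BipGraph V) : ℕ := A.E.card

/-- the underlying simple graph on the vertex set of `A` -/
def graph (A : BipGraph V) : SimpleGraph {x : V // x ∈ A.verts} where
  Adj x y := (x.1, y.1) ∈ A.E ∨ (y.1, x.1) ∈ A.E
  symm := by
    constructor
    intro x y h
    exact h.symm
  loopless := by
    constructor
    intro x h
    have hx : (x.1, x.1) ∈ A.E := by rcases h with h | h <;> exact h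
    have hmem := A.E_sub hx
    rw [Finset.mem_product] at hmem
    exact Finset.disjoint_left.mp A.disj hmem.1 hmem.2

/-- `CC A` is the number of connected components of `A` (isolated vertices count). -/
def CC (A : BipGraph V) : ℕ := Nat.card A.graph.ConnectedComponent

/-- `k A = v A - CC A` -/
def k (A : BipGraph V) : ℕ := A.v - A.CC

/-- `A` is complete if every left-right pair is an edge. -/
def Complete (A : BipGraph V) : Prop := A.E = A.L ×ˢ A.R

/-- `A` is balanced if its parts differ in size by at most one. -/
def Balanced (A : BipGraph V) : Prop := ((A.L.card : ℤ) - (A.R.card : ℤ)).natAbs ≤ 1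

/-- `A` is null if it has no edges. -/
def Null (A : BipGraph V) : Prop := A.E = ∅

/-- the induced subgraph of `A` on a set `S` of vertices: the vertices of `A`
belonging to `S`, together with all edges of `A` between them. -/
def induce (A : BipGraph V) (S : Finset V) : BipGraph V where
  L := A.L ∩ S
  R := A.R ∩ S
  disj := A.disj.mono Finset.inter_subset_left Finset.inter_subset_left
  E := A.E.filter (fun p => p.1 ∈ S ∧ p.2 ∈ S)
  E_sub := by
    intro p hp
    rw [Finset.mem_filter] at hp
    have hmem := A.E_sub hp.1
    rw [Finset.mem_product] at hmem ⊢
    exact ⟨Finset.mem_inter.mpr ⟨hmem.1, hp.2.1⟩, Finset.mem_inter.mpr ⟨hmem.2, hp.2.2⟩⟩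

/-- the degree of a vertex: the number of edges incident to it -/
def deg (A : BipGraph V) (x : V) : ℕ :=
  (A.E.filter (fun p => p.1 = x ∨ p.2 = x)).card

/-- `A` is almost `ℓ`-complete: the two parts have sizes within `0.01 * ℓ` of `ℓ`,
and every vertex has degree at least `0.9 * ℓ`. -/
def AlmostComplete (ℓ : ℕ) (A : BipGraph V) : Prop :=
  |(A.L.card : ℝ) - (ℓ : ℝ)| ≤ 0.01 * ℓ ∧ |(A.R.card : ℝ) - (ℓ : ℝ)| ≤ 0.01 * ℓ ∧
  ∀ x ∈ A.verts, (0.9 : ℝ) * ℓ ≤ (A.deg x : ℝ)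

/-- the disjoint union of two vertex-disjoint bipartite graphs -/
def disjUnion (A B : BipGraph V) (h : Disjoint A.verts B.verts) : BipGraph V where
  L := A.L ∪ B.L
  R := A.R ∪ B.R
  disj := by
    have h1 : Disjoint A.L B.R := h.mono Finset.subset_union_left Finset.subset_union_right
    have h2 : Disjoint B.L A.R := h.symm.mono Finset.subset_union_left Finset.subset_union_right
    rw [Finset.disjoint_union_left, Finset.disjoint_union_right, Finset.disjoint_union_right]
    exact ⟨⟨A.disj, h1⟩, ⟨h2, B.disj⟩⟩
  E := A.E ∪ B.E
  E_sub := by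
    intro p hp
    rw [Finset.mem_union] at hp
    rw [Finset.mem_product]
    rcases hp with hp | hp
    · have := A.E_sub hp; rw [Finset.mem_product] at this
      exact ⟨Finset.mem_union_left _ this.1, Finset.mem_union_left _ this.2⟩
    · have := B.E_sub hp; rw [Finset.mem_product] at this
      exact ⟨Finset.mem_union_right _ this.1, Finset.mem_union_right _ this.2⟩

end BipGraph

/-- `estar (2*b) = b^2` and `estar (2*b+1) = b*(b+1)`; i.e. `⌊c/2⌋ * ⌈c/2⌉`. -/
def estar (c : ℕ) : ℕ := (c / 2) * ((c + 1) / 2)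

open Finset

lemma nat_two_mul_le (a b : ℕ) : 2 * (a * b) ≤ (a + b) * (a + b - 1) := by
  rcases Nat.eq_zero_or_pos a with ha | ha
  · simp [ha]
  rcases Nat.eq_zero_or_pos b with hb | hb
  · simp [hb]
  obtain ⟨a', rfl⟩ := Nat.exists_eq_add_of_le ha
  obtain ⟨b', rfl⟩ := Nat.exists_eq_add_of_le hb
  have : 1 + a' + (1 + b') - 1 = 1 + a' + b' := by omega
  rw [this]
  nlinarith [sq_nonneg (a' - b' : ℕ), Nat.zero_le (a' * a' + b' * b')]

namespace BipGraph

lemma exists_big_component {V : Type} [DecidableEq V] (A : BipGraph V) (hne : A.E.Nonempty) :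
    ∃ (S : Finset V) (r : ℕ),
      S ⊆ A.verts ∧ (∀ p ∈ A.E, (p.1 ∈ S ↔ p.2 ∈ S)) ∧
      1 ≤ S.card ∧ A.k = (S.card - 1) + r ∧
      4 * A.e ≤ S.card ^ 2 + 2 * S.card * r ∧
      A.e ≤ (A.E.filter fun p => p.1 ∈ S ∧ p.2 ∈ S).card + S.card * r := by
  classical
  set T := {x : V // x ∈ A.verts}
  set G := A.graph with hG
  haveI : Fintype G.ConnectedComponent := Fintype.ofFinite _
  set C := G.ConnectedComponent
  set comp : T → C := G.connectedComponentMk with hcomp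
  set Sc : C → Finset V := fun c => (A.verts.attach.filter fun x => comp x = c).image Subtype.val
    with hSc
  have hmem_Sc : ∀ (y : V) (c : C), y ∈ Sc c ↔ ∃ h : y ∈ A.verts, comp ⟨y, h⟩ = c := by
    intro y c
    simp only [hSc, mem_image, mem_filter, mem_attach, true_and, Subtype.exists]
    aesop
  set n : C → ℕ := fun c => (Sc c).card with hn
  have hncard : ∀ c, n c = (A.verts.attach.filter fun x => comp x = c).card := by
    intro c
    exact Finset.card_image_of_injective _ Subtype.val_injective
  have hv : A.v = ∑ c : C, n c := by
    have h1 : A.v = A.verts.attach.card := by rw [Finset.card_attach]; rfl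
    rw [h1, Finset.card_eq_sum_card_fiberwise (f := comp) (t := Finset.univ)
      (fun x _ => Finset.mem_univ _)]
    exact Finset.sum_congr rfl fun c _ => (hncard c).symm
  have hn1 : ∀ c, 1 ≤ n c := by
    intro c
    obtain ⟨x, hx⟩ := c.exists_rep
    rw [hncard]
    refine Finset.card_pos.mpr ⟨x, ?_⟩
    exact Finset.mem_filter.mpr ⟨Finset.mem_attach _ _, hx⟩
  have hCC : A.CC = Fintype.card C := Nat.card_eq_fintype_card
  have hk : A.k = ∑ c : C, (n c - 1) := by
    have h2 : ∑ c : C, n c = (∑ c : C, (n c - 1)) + Fintype.card C := by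
      rw [← Finset.card_univ, Finset.card_eq_sum_ones, ← Finset.sum_add_distrib]
      exact Finset.sum_congr rfl fun c _ => by have := hn1 c; omega
    unfold BipGraph.k
    rw [hv, hCC, h2]
    omega
  -- nonempty C
  obtain ⟨p0, hp0⟩ := hne
  have hp0L : p0.1 ∈ A.L := by
    have := A.E_sub hp0; rw [Finset.mem_product] at this; exact this.1
  have hvert1 : p0.1 ∈ A.verts := Finset.mem_union_left _ hp0L
  haveI : Nonempty C := ⟨comp ⟨p0.1, hvert1⟩⟩
  -- edge fiber function
  set g : V × V → C := fun p =>
    if h : p.1 ∈ A.verts then comp ⟨p.1, h⟩ else Classical.arbitrary C with hg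
  have hvL : ∀ p ∈ A.E, p.1 ∈ A.verts := fun p hp => by
    have := A.E_sub hp; rw [Finset.mem_product] at this
    exact Finset.mem_union_left _ this.1
  have hvR : ∀ p ∈ A.E, p.2 ∈ A.verts := fun p hp => by
    have := A.E_sub hp; rw [Finset.mem_product] at this
    exact Finset.mem_union_right _ this.2
  have hsame : ∀ p (hp : p ∈ A.E), comp ⟨p.1, hvL p hp⟩ = comp ⟨p.2, hvR p hp⟩ := by
    intro p hp
    apply SimpleGraph.ConnectedComponent.sound
    apply SimpleGraph.Adj.reachable
    left
    simpa using hp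
  have hg_eq : ∀ p (hp : p ∈ A.E), g p = comp ⟨p.1, hvL p hp⟩ := by
    intro p hp
    rw [hg]
    simp [hvL p hp]
  have hmem1 : ∀ p (hp : p ∈ A.E) (c : C), p.1 ∈ Sc c ↔ g p = c := by
    intro p hp c
    rw [hmem_Sc, hg_eq p hp]
    constructor
    · rintro ⟨h, hc⟩; exact hc
    · intro h; exact ⟨hvL p hp, h⟩
  have hmem2 : ∀ p (hp : p ∈ A.E) (c : C), p.2 ∈ Sc c ↔ g p = c := by
    intro p hp c
    rw [hmem_Sc, hg_eq p hp]
    constructor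
    · rintro ⟨h, hc⟩; rw [← hc]; exact (hsame p hp)
    · intro h; exact ⟨hvR p hp, (hsame p hp).symm.trans h⟩
  set eC : C → ℕ := fun c => (A.E.filter fun p => g p = c).card with heC
  have he : A.e = ∑ c : C, eC c :=
    Finset.card_eq_sum_card_fiberwise (fun x _ => Finset.mem_univ _)
  -- per-component bounds
  have hsplit : ∀ c, (A.L ∩ Sc c).card + (A.R ∩ Sc c).card = n c := by
    intro c
    have hsub : Sc c ⊆ A.verts := by
      intro y hy
      rw [hmem_Sc] at hy
      exact hy.1
    rw [← Finset.card_union_of_disjoint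
      (A.disj.mono Finset.inter_subset_left Finset.inter_subset_left)]
    congr 1
    rw [← Finset.union_inter_distrib_right]
    exact Finset.inter_eq_right.mpr (fun y hy => hsub hy)
  have heCle : ∀ c, eC c ≤ (A.L ∩ Sc c).card * (A.R ∩ Sc c).card := by
    intro c
    rw [heC]
    calc (A.E.filter fun p => g p = c).card
        ≤ ((A.L ∩ Sc c) ×ˢ (A.R ∩ Sc c)).card := by
          apply Finset.card_le_card
          intro p hp
          rw [Finset.mem_filter] at hp
          obtain ⟨hpE, hpc⟩ := hp
          have hprod := A.E_sub hpE; rw [Finset.mem_product] at hprod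
          rw [Finset.mem_product]
          exact ⟨Finset.mem_inter.mpr ⟨hprod.1, (hmem1 p hpE c).mpr hpc⟩,
                 Finset.mem_inter.mpr ⟨hprod.2, (hmem2 p hpE c).mpr hpc⟩⟩
      _ = _ := Finset.card_product _ _
  have heC2 : ∀ c, 2 * eC c ≤ n c * (n c - 1) := by
    intro c
    calc 2 * eC c ≤ 2 * ((A.L ∩ Sc c).card * (A.R ∩ Sc c).card) := by
          exact Nat.mul_le_mul_left _ (heCle c)
      _ ≤ ((A.L ∩ Sc c).card + (A.R ∩ Sc c).card) *
            (((A.L ∩ Sc c).card + (A.R ∩ Sc c).card) - 1) := nat_two_mul_le _ _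
      _ = n c * (n c - 1) := by rw [hsplit c]
  have heC4 : ∀ c, 4 * eC c ≤ n c ^ 2 := by
    intro c
    have h1 := heCle c
    have h2 := hsplit c
    have := two_mul_le_add_sq (A.L ∩ Sc c).card (A.R ∩ Sc c).card
    nlinarith [h1, h2]
  -- max component
  obtain ⟨cm, _, hcm⟩ := Finset.exists_max_image (Finset.univ : Finset C) n
    ⟨Classical.arbitrary C, Finset.mem_univ _⟩
  refine ⟨Sc cm, ∑ c ∈ Finset.univ.erase cm, (n c - 1), ?_, ?_, ?_, ?_, ?_, ?_⟩
  · intro y hy; rw [hmem_Sc] at hy; exact hy.1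
  · intro p hp
    rw [hmem1 p hp cm, hmem2 p hp cm]
  · exact hn1 cm
  · rw [hk, ← Finset.add_sum_erase _ _ (Finset.mem_univ cm)]
  · -- 4e ≤ n cm ^2 + 2 n cm * r
    rw [he, Finset.mul_sum, ← Finset.add_sum_erase _ _ (Finset.mem_univ cm)]
    gcongr
    · exact heC4 cm
    · rw [Finset.mul_sum]
      apply Finset.sum_le_sum
      intro c hc
      calc 4 * eC c ≤ 2 * (n c * (n c - 1)) := by
            have := heC2 c; omega
        _ ≤ 2 * ((Sc cm).card * (n c - 1)) := by
            gcongr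
            exact hcm c (Finset.mem_univ c)
        _ = 2 * (Sc cm).card * (n c - 1) := by ring
  · -- e ≤ eS + n cm * r
    have hfe : (A.E.filter fun p => p.1 ∈ Sc cm ∧ p.2 ∈ Sc cm).card = eC cm := by
      rw [heC]
      congr 1
      apply Finset.filter_congr
      intro p hp
      simp only [hmem1 p hp cm, hmem2 p hp cm, and_self]
    rw [hfe, he, ← Finset.add_sum_erase _ _ (Finset.mem_univ cm), Finset.mul_sum]
    gcongr with c hc
    calc eC c ≤ n c * (n c - 1) := by have := heC2 c; omega
      _ ≤ (Sc cm).card * (n c - 1) := by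
          gcongr; exact hcm c (Finset.mem_univ c)

end BipGraph


namespace BipGraph
open Finset

variable {V : Type} [DecidableEq V]

lemma deg_induce_of_left (A : BipGraph V) (S : Finset V) {x : V}
    (hxL : x ∈ A.L) (hxS : x ∈ S) :
    (A.induce S).deg x = ((A.R ∩ S).filter fun y => (x, y) ∈ A.E).card := by
  classical
  have hE : (A.induce S).E = A.E.filter (fun p => p.1 ∈ S ∧ p.2 ∈ S) := rfl
  unfold BipGraph.deg
  rw [hE, Finset.filter_filter]
  apply Finset.card_bij (fun p _ => p.2)
  · intro p hp
    simp only [Finset.mem_filter] at hp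
    obtain ⟨hpE, ⟨hp1S, hp2S⟩, hor⟩ := hp
    have hmem := A.E_sub hpE; rw [Finset.mem_product] at hmem
    have hp1 : p.1 = x := by
      rcases hor with h | h
      · exact h
      · exact absurd (h ▸ hmem.2) (fun hh => Finset.disjoint_left.mp A.disj hxL hh)
    have hpx : (x, p.2) = p := by rw [← hp1]
    rw [Finset.mem_filter, Finset.mem_inter]
    exact ⟨⟨hmem.2, hp2S⟩, hpx ▸ hpE⟩
  · intro p hp q hq hpq
    simp only [Finset.mem_filter] at hp hq
    have hmp := A.E_sub hp.1; rw [Finset.mem_product] at hmp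
    have hmq := A.E_sub hq.1; rw [Finset.mem_product] at hmq
    have hp1 : p.1 = x := by
      rcases hp.2.2 with h | h
      · exact h
      · exact absurd (h ▸ hmp.2) (fun hh => Finset.disjoint_left.mp A.disj hxL hh)
    have hq1 : q.1 = x := by
      rcases hq.2.2 with h | h
      · exact h
      · exact absurd (h ▸ hmq.2) (fun hh => Finset.disjoint_left.mp A.disj hxL hh)
    exact Prod.ext (hp1.trans hq1.symm) hpq
  · intro y hy
    rw [Finset.mem_filter, Finset.mem_inter] at hy
    exact ⟨(x, y), Finset.mem_filter.mpr ⟨hy.2, ⟨hxS, hy.1.2⟩, Or.inl rfl⟩, rfl⟩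

lemma deg_induce_of_right (A : BipGraph V) (S : Finset V) {x : V}
    (hxR : x ∈ A.R) (hxS : x ∈ S) :
    (A.induce S).deg x = ((A.L ∩ S).filter fun y => (y, x) ∈ A.E).card := by
  classical
  have hE : (A.induce S).E = A.E.filter (fun p => p.1 ∈ S ∧ p.2 ∈ S) := rfl
  unfold BipGraph.deg
  rw [hE, Finset.filter_filter]
  apply Finset.card_bij (fun p _ => p.1)
  · intro p hp
    simp only [Finset.mem_filter] at hp
    obtain ⟨hpE, ⟨hp1S, hp2S⟩, hor⟩ := hp
    have hmem := A.E_sub hpE; rw [Finset.mem_product] at hmem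
    have hp2 : p.2 = x := by
      rcases hor with h | h
      · exact absurd (h ▸ hmem.1) (fun hh => Finset.disjoint_left.mp A.disj hh hxR)
      · exact h
    have hpx : (p.1, x) = p := by rw [← hp2]
    rw [Finset.mem_filter, Finset.mem_inter]
    exact ⟨⟨hmem.1, hp1S⟩, hpx ▸ hpE⟩
  · intro p hp q hq hpq
    simp only [Finset.mem_filter] at hp hq
    have hmp := A.E_sub hp.1; rw [Finset.mem_product] at hmp
    have hmq := A.E_sub hq.1; rw [Finset.mem_product] at hmq
    have hp2 : p.2 = x := by
      rcases hp.2.2 with h | h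
      · exact absurd (h ▸ hmp.1) (fun hh => Finset.disjoint_left.mp A.disj hh hxR)
      · exact h
    have hq2 : q.2 = x := by
      rcases hq.2.2 with h | h
      · exact absurd (h ▸ hmq.1) (fun hh => Finset.disjoint_left.mp A.disj hh hxR)
      · exact h
    exact Prod.ext hpq (hp2.trans hq2.symm)
  · intro y hy
    rw [Finset.mem_filter, Finset.mem_inter] at hy
    exact ⟨(y, x), Finset.mem_filter.mpr ⟨hy.2, ⟨hy.1.2, hxS⟩, Or.inr rfl⟩, rfl⟩

lemma parts_card (A : BipGraph V) {S : Finset V} (hS : S ⊆ A.verts) :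
    (A.L ∩ S).card + (A.R ∩ S).card = S.card := by
  rw [← Finset.card_union_of_disjoint
    (A.disj.mono Finset.inter_subset_left Finset.inter_subset_left)]
  congr 1
  rw [← Finset.union_inter_distrib_right]
  exact Finset.inter_eq_right.mpr hS

lemma sum_nbr_left (A : BipGraph V) (S : Finset V) :
    ∑ x ∈ A.L ∩ S, ((A.R ∩ S).filter fun y => (x, y) ∈ A.E).card
      = (A.E.filter fun p => p.1 ∈ S ∧ p.2 ∈ S).card := by
  classical
  have hmap : ∀ p ∈ A.E.filter (fun p => p.1 ∈ S ∧ p.2 ∈ S), p.1 ∈ A.L ∩ S := by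
    intro p hp
    rw [Finset.mem_filter] at hp
    have := A.E_sub hp.1; rw [Finset.mem_product] at this
    exact Finset.mem_inter.mpr ⟨this.1, hp.2.1⟩
  rw [Finset.card_eq_sum_card_fiberwise hmap]
  apply Finset.sum_congr rfl
  intro x hx
  rw [Finset.mem_inter] at hx
  apply Finset.card_bij (fun y _ => (x, y))
  · intro y hy
    rw [Finset.mem_filter, Finset.mem_inter] at hy
    exact Finset.mem_filter.mpr ⟨Finset.mem_filter.mpr ⟨hy.2, hx.2, hy.1.2⟩, rfl⟩
  · intro y _ z _ h
    exact (Prod.mk.injEq _ _ _ _).mp h |>.2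
  · intro p hp
    simp only [Finset.mem_filter] at hp
    obtain ⟨⟨hpE, hp1S, hp2S⟩, hp1⟩ := hp
    have := A.E_sub hpE; rw [Finset.mem_product] at this
    refine ⟨p.2, Finset.mem_filter.mpr ⟨Finset.mem_inter.mpr ⟨this.2, hp2S⟩, ?_⟩, ?_⟩
    · have : (x, p.2) = p := by rw [← hp1]
      rw [this]; exact hpE
    · rw [← hp1]

lemma sum_nbr_right (A : BipGraph V) (S : Finset V) :
    ∑ x ∈ A.R ∩ S, ((A.L ∩ S).filter fun y => (y, x) ∈ A.E).card
      = (A.E.filter fun p => p.1 ∈ S ∧ p.2 ∈ S).card := by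
  classical
  have hmap : ∀ p ∈ A.E.filter (fun p => p.1 ∈ S ∧ p.2 ∈ S), p.2 ∈ A.R ∩ S := by
    intro p hp
    rw [Finset.mem_filter] at hp
    have := A.E_sub hp.1; rw [Finset.mem_product] at this
    exact Finset.mem_inter.mpr ⟨this.2, hp.2.2⟩
  rw [Finset.card_eq_sum_card_fiberwise hmap]
  apply Finset.sum_congr rfl
  intro x hx
  rw [Finset.mem_inter] at hx
  apply Finset.card_bij (fun y _ => (y, x))
  · intro y hy
    rw [Finset.mem_filter, Finset.mem_inter] at hy
    exact Finset.mem_filter.mpr ⟨Finset.mem_filter.mpr ⟨hy.2, hy.1.2, hx.2⟩, rfl⟩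
  · intro y _ z _ h
    exact (Prod.mk.injEq _ _ _ _).mp h |>.1
  · intro p hp
    simp only [Finset.mem_filter] at hp
    obtain ⟨⟨hpE, hp1S, hp2S⟩, hp2⟩ := hp
    have := A.E_sub hpE; rw [Finset.mem_product] at this
    refine ⟨p.1, Finset.mem_filter.mpr ⟨Finset.mem_inter.mpr ⟨this.1, hp1S⟩, ?_⟩, ?_⟩
    · have : (p.1, x) = p := by rw [← hp2]
      rw [this]; exact hpE
    · rw [← hp2]

end BipGraph

set_option maxHeartbeats 8000000 in
/-- for every `W` there is `ℓ₀` such that for all `ℓ ≥ ℓ₀`, every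
bipartite graph `A` with `k(A) ≤ 2ℓ + W` and `e(A) ≥ ℓ²` contains an induced
subgraph that is almost `ℓ`-complete. -/
theorem almost_complete_subgraph_of_k (W : ℕ) :
    ∃ ℓ₀ : ℕ, ∀ ℓ : ℕ, ℓ₀ ≤ ℓ →
      ∀ (V : Type) [DecidableEq V] (A : BipGraph V),
        A.k ≤ 2 * ℓ + W → ℓ ^ 2 ≤ A.e →
        ∃ S : Finset V, BipGraph.AlmostComplete ℓ (A.induce S) := by
  classical
  refine ⟨10^16 * (W+1)^2, ?_⟩
  intro ℓ hℓ V _ A hkA heA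
  have hℓ1 : 1 ≤ ℓ := le_trans (Nat.one_le_iff_ne_zero.mpr (by positivity)) hℓ
  have hne : A.E.Nonempty := by
    rw [← Finset.card_pos]
    calc 0 < ℓ ^ 2 := by positivity
      _ ≤ A.e := heA
  obtain ⟨S, r, hSsub, hiff, hS1, hkeq, hI, hII⟩ := A.exists_big_component hne
  set a := (A.L ∩ S).card with ha_def
  set b := (A.R ∩ S).card with hb_def
  set eS := (A.E.filter fun p => p.1 ∈ S ∧ p.2 ∈ S).card with heS_def
  have hab : a + b = S.card := A.parts_card hSsub
  have heSab : eS ≤ a * b := by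
    rw [heS_def, ← Finset.card_product]
    apply Finset.card_le_card
    intro p hp
    rw [Finset.mem_filter] at hp
    have := A.E_sub hp.1; rw [Finset.mem_product] at this
    rw [Finset.mem_product]
    exact ⟨Finset.mem_inter.mpr ⟨this.1, hp.2.1⟩, Finset.mem_inter.mpr ⟨this.2, hp.2.2⟩⟩
  -- natural number inequalities
  have h1n : S.card + r ≤ 2 * ℓ + W + 1 := by omega
  have h2n : 4 * ℓ ^ 2 ≤ S.card ^ 2 + 2 * S.card * r :=
    le_trans (Nat.mul_le_mul_left 4 heA) hI
  have h3n : ℓ ^ 2 ≤ eS + S.card * r := le_trans heA hII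
  -- real versions
  set Lr : ℝ := (ℓ : ℝ) with hLr_def
  set U : ℝ := (W : ℝ) + 1 with hU_def
  have hU1 : (1 : ℝ) ≤ U := by
    rw [hU_def]
    have : (0:ℝ) ≤ (W:ℝ) := Nat.cast_nonneg W
    linarith
  have hL16 : 10^16 * U^2 ≤ Lr := by
    rw [hLr_def, hU_def]
    exact_mod_cast hℓ
  have hL1 : (1:ℝ) ≤ Lr := by nlinarith
  have hLpos : (0:ℝ) < Lr := by linarith
  have hUL : U * 10^16 ≤ Lr := by nlinarith
  have h1r : (S.card : ℝ) + r ≤ 2 * Lr + U := by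
    rw [hLr_def, hU_def]; exact_mod_cast h1n
  have h2r : 4 * Lr^2 ≤ (S.card:ℝ)^2 + 2 * S.card * r := by
    rw [hLr_def]; exact_mod_cast h2n
  have h3r : Lr^2 ≤ (eS:ℝ) + S.card * r := by
    rw [hLr_def]; exact_mod_cast h3n
  have habr : (a:ℝ) + b = S.card := by exact_mod_cast hab
  have hrpos : (0:ℝ) ≤ (r:ℝ) := Nat.cast_nonneg r
  have hapos : (0:ℝ) ≤ (a:ℝ) := Nat.cast_nonneg a
  have hbpos : (0:ℝ) ≤ (b:ℝ) := Nat.cast_nonneg b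
  have hsr : (S.card : ℝ) ≤ 2 * Lr + U := by linarith
  -- r is small
  have hr2 : (r:ℝ)^2 ≤ 4 * Lr * U + U^2 := by nlinarith [sq_nonneg ((S.card:ℝ) + r)]
  have hrL : (r:ℝ) ≤ Lr / 10^7 := by
    nlinarith [sq_nonneg ((r:ℝ) - Lr / 10^7), sq_nonneg Lr]
  -- eS is large
  have her : Lr^2 - 3 * Lr^2 / 10^7 ≤ (eS:ℝ) := by nlinarith
  have habe : (eS : ℝ) ≤ (a:ℝ) * b := by exact_mod_cast heSab
  -- both sides are large
  have hb995 : 199/200 * Lr ≤ (b:ℝ) := by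
    by_contra hcon
    push_neg at hcon
    nlinarith [mul_nonneg (show (0:ℝ) ≤ 199/200 * Lr - b by linarith)
      (show (0:ℝ) ≤ 201/200 * Lr + U - b by nlinarith),
      mul_le_mul_of_nonneg_right (show (a:ℝ) ≤ 2*Lr + U - b by linarith) hbpos]
  have ha995 : 199/200 * Lr ≤ (a:ℝ) := by
    by_contra hcon
    push_neg at hcon
    nlinarith [mul_nonneg (show (0:ℝ) ≤ 199/200 * Lr - a by linarith)
      (show (0:ℝ) ≤ 201/200 * Lr + U - a by nlinarith),
      mul_le_mul_of_nonneg_left (show (b:ℝ) ≤ 2*Lr + U - a by linarith) hapos]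
  have haup : (a:ℝ) ≤ 201/200 * Lr + U := by linarith
  have hbup : (b:ℝ) ≤ 201/200 * Lr + U := by linarith
  -- missing edges
  set M := a * b - eS with hM_def
  have hMr : (M : ℝ) = (a:ℝ) * b - eS := by
    rw [hM_def, Nat.cast_sub heSab]; push_cast; ring
  have hM : (M : ℝ) ≤ Lr^2 / 10^6 := by
    have h4ab : 4 * ((a:ℝ) * b) ≤ (S.card:ℝ)^2 := by
      nlinarith [sq_nonneg ((a:ℝ) - b)]
    nlinarith
  -- degree functions and bad sets
  set dL : V → ℕ := fun x => ((A.R ∩ S).filter fun y => (x, y) ∈ A.E).card with hdL_def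
  set dR : V → ℕ := fun x => ((A.L ∩ S).filter fun y => (y, x) ∈ A.E).card with hdR_def
  set badL := (A.L ∩ S).filter (fun x => 20 * dL x ≤ 19 * ℓ) with hbadL_def
  set badR := (A.R ∩ S).filter (fun x => 20 * dR x ≤ 19 * ℓ) with hbadR_def
  set bad := badL ∪ badR with hbad_def
  set S' := S \ bad with hS'_def
  have hdLle : ∀ x ∈ A.L ∩ S, dL x ≤ b := fun x _ => Finset.card_filter_le _ _
  have hdRle : ∀ x ∈ A.R ∩ S, dR x ≤ a := fun x _ => Finset.card_filter_le _ _
  have hsumL : ∑ x ∈ A.L ∩ S, dL x = eS := A.sum_nbr_left S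
  have hsumR : ∑ x ∈ A.R ∩ S, dR x = eS := A.sum_nbr_right S
  have hMsumL : ∑ x ∈ A.L ∩ S, (b - dL x) = M := by
    have h := Finset.sum_congr rfl (fun x hx => Nat.sub_add_cancel (hdLle x hx))
    rw [Finset.sum_add_distrib, hsumL, Finset.sum_const, smul_eq_mul, ← ha_def] at h
    omega
  have hMsumR : ∑ x ∈ A.R ∩ S, (a - dR x) = M := by
    have h := Finset.sum_congr rfl (fun x hx => Nat.sub_add_cancel (hdRle x hx))
    rw [Finset.sum_add_distrib, hsumR, Finset.sum_const, smul_eq_mul, ← hb_def,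
      mul_comm b a] at h
    omega
  have hbadLn : badL.card * (20 * b) ≤ 20 * M + 19 * ℓ * badL.card := by
    calc badL.card * (20 * b) = ∑ _x ∈ badL, 20 * b := by
          rw [Finset.sum_const, smul_eq_mul]
      _ ≤ ∑ x ∈ badL, (20 * (b - dL x) + 19 * ℓ) := by
          apply Finset.sum_le_sum
          intro x hx
          rw [hbadL_def, Finset.mem_filter] at hx
          have := hdLle x hx.1
          omega
      _ = 20 * (∑ x ∈ badL, (b - dL x)) + 19 * ℓ * badL.card := by
          rw [Finset.sum_add_distrib, Finset.mul_sum, Finset.sum_const, smul_eq_mul]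
          ring
      _ ≤ 20 * M + 19 * ℓ * badL.card := by
          have : ∑ x ∈ badL, (b - dL x) ≤ M := by
            rw [← hMsumL]
            exact Finset.sum_le_sum_of_subset (Finset.filter_subset _ _)
          omega
  have hbadRn : badR.card * (20 * a) ≤ 20 * M + 19 * ℓ * badR.card := by
    calc badR.card * (20 * a) = ∑ _x ∈ badR, 20 * a := by
          rw [Finset.sum_const, smul_eq_mul]
      _ ≤ ∑ x ∈ badR, (20 * (a - dR x) + 19 * ℓ) := by
          apply Finset.sum_le_sum
          intro x hx
          rw [hbadR_def, Finset.mem_filter] at hx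
          have := hdRle x hx.1
          omega
      _ = 20 * (∑ x ∈ badR, (a - dR x)) + 19 * ℓ * badR.card := by
          rw [Finset.sum_add_distrib, Finset.mul_sum, Finset.sum_const, smul_eq_mul]
          ring
      _ ≤ 20 * M + 19 * ℓ * badR.card := by
          have : ∑ x ∈ badR, (a - dR x) ≤ M := by
            rw [← hMsumR]
            exact Finset.sum_le_sum_of_subset (Finset.filter_subset _ _)
          omega
  -- bad sets are small (real)
  have hnL : (badL.card : ℝ) ≤ 3/100000 * Lr := by
    have hc : (badL.card : ℝ) * (20 * b) ≤ 20 * M + 19 * Lr * badL.card := by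
      rw [hLr_def]; exact_mod_cast hbadLn
    have h0 : (0:ℝ) ≤ (badL.card : ℝ) := Nat.cast_nonneg _
    nlinarith [mul_nonneg h0 (show (0:ℝ) ≤ (b:ℝ) - 199/200 * Lr by linarith)]
  have hnR : (badR.card : ℝ) ≤ 3/100000 * Lr := by
    have hc : (badR.card : ℝ) * (20 * a) ≤ 20 * M + 19 * Lr * badR.card := by
      rw [hLr_def]; exact_mod_cast hbadRn
    have h0 : (0:ℝ) ≤ (badR.card : ℝ) := Nat.cast_nonneg _
    nlinarith [mul_nonneg h0 (show (0:ℝ) ≤ (a:ℝ) - 199/200 * Lr by linarith)]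
  have hbadcard : (bad.card : ℝ) ≤ 6/100000 * Lr := by
    have := Finset.card_union_le badL badR
    have hcast : (bad.card : ℝ) ≤ (badL.card : ℝ) + badR.card := by
      rw [hbad_def]; exact_mod_cast this
    linarith
  -- cardinalities after cleaning
  set a' := (A.L ∩ S').card with ha'_def
  set b' := (A.R ∩ S').card with hb'_def
  have hS'S : S' ⊆ S := by rw [hS'_def]; exact Finset.sdiff_subset
  have ha'le : a' ≤ a :=
    Finset.card_le_card (Finset.inter_subset_inter Finset.Subset.rfl hS'S)
  have hb'le : b' ≤ b :=
    Finset.card_le_card (Finset.inter_subset_inter Finset.Subset.rfl hS'S)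
  have ha'ge : a ≤ a' + bad.card := by
    calc a ≤ ((A.L ∩ S') ∪ bad).card := by
          apply Finset.card_le_card
          intro x hx
          rw [Finset.mem_inter] at hx
          by_cases hxb : x ∈ bad
          · exact Finset.mem_union_right _ hxb
          · exact Finset.mem_union_left _ (Finset.mem_inter.mpr
              ⟨hx.1, Finset.mem_sdiff.mpr ⟨hx.2, hxb⟩⟩)
      _ ≤ a' + bad.card := Finset.card_union_le _ _
  have hb'ge : b ≤ b' + bad.card := by
    calc b ≤ ((A.R ∩ S') ∪ bad).card := by
          apply Finset.card_le_card
          intro x hx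
          rw [Finset.mem_inter] at hx
          by_cases hxb : x ∈ bad
          · exact Finset.mem_union_right _ hxb
          · exact Finset.mem_union_left _ (Finset.mem_inter.mpr
              ⟨hx.1, Finset.mem_sdiff.mpr ⟨hx.2, hxb⟩⟩)
      _ ≤ b' + bad.card := Finset.card_union_le _ _
  have ha'r1 : (a':ℝ) ≤ (a:ℝ) := by exact_mod_cast ha'le
  have hb'r1 : (b':ℝ) ≤ (b:ℝ) := by exact_mod_cast hb'le
  have ha'r2 : (a:ℝ) ≤ (a':ℝ) + bad.card := by exact_mod_cast ha'ge
  have hb'r2 : (b:ℝ) ≤ (b':ℝ) + bad.card := by exact_mod_cast hb'ge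
  have h001 : (0.01 : ℝ) = 1/100 := by norm_num
  have h09 : (0.9 : ℝ) = 9/10 := by norm_num
  refine ⟨S', ?_, ?_, ?_⟩
  · -- left part size
    have hLeq : (A.induce S').L = A.L ∩ S' := rfl
    rw [hLeq, ← ha'_def, ← hLr_def, h001, abs_le]
    constructor
    · linarith
    · linarith
  · -- right part size
    have hReq : (A.induce S').R = A.R ∩ S' := rfl
    rw [hReq, ← hb'_def, ← hLr_def, h001, abs_le]
    constructor
    · linarith
    · linarith
  · -- degrees
    intro x hx
    have hx' : x ∈ (A.L ∩ S') ∪ (A.R ∩ S') := hx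
    rw [Finset.mem_union] at hx'
    rcases hx' with hxl | hxr
    · -- x on the left
      rw [Finset.mem_inter] at hxl
      obtain ⟨hxL, hxS'⟩ := hxl
      have hxS : x ∈ S := (Finset.mem_sdiff.mp hxS').1
      have hxnb : x ∉ bad := (Finset.mem_sdiff.mp hxS').2
      have hxnbL : ¬ (20 * dL x ≤ 19 * ℓ) := by
        intro hcon
        exact hxnb (Finset.mem_union_left _ (Finset.mem_filter.mpr
          ⟨Finset.mem_inter.mpr ⟨hxL, hxS⟩, hcon⟩))
      have hdeg : (A.induce S').deg x = ((A.R ∩ S').filter fun y => (x, y) ∈ A.E).card :=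
        A.deg_induce_of_left S' hxL hxS'
      have hsub : (A.R ∩ S).filter (fun y => (x, y) ∈ A.E) ⊆
          ((A.R ∩ S').filter fun y => (x, y) ∈ A.E) ∪ bad := by
        intro y hy
        rw [Finset.mem_filter, Finset.mem_inter] at hy
        by_cases hyb : y ∈ bad
        · exact Finset.mem_union_right _ hyb
        · exact Finset.mem_union_left _ (Finset.mem_filter.mpr
            ⟨Finset.mem_inter.mpr ⟨hy.1.1, Finset.mem_sdiff.mpr ⟨hy.1.2, hyb⟩⟩, hy.2⟩)
      have hdrop : dL x ≤ (A.induce S').deg x + bad.card := by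
        rw [hdeg]
        calc dL x ≤ (((A.R ∩ S').filter fun y => (x, y) ∈ A.E) ∪ bad).card :=
              Finset.card_le_card hsub
          _ ≤ _ := Finset.card_union_le _ _
      have hd1 : (19:ℝ) * Lr < 20 * dL x := by
        rw [hLr_def]; exact_mod_cast Nat.lt_of_not_le hxnbL
      have hd2 : (dL x : ℝ) ≤ ((A.induce S').deg x : ℝ) + bad.card := by
        exact_mod_cast hdrop
      rw [← hLr_def, h09]
      linarith
    · -- x on the right
      rw [Finset.mem_inter] at hxr
      obtain ⟨hxR, hxS'⟩ := hxr
      have hxS : x ∈ S := (Finset.mem_sdiff.mp hxS').1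
      have hxnb : x ∉ bad := (Finset.mem_sdiff.mp hxS').2
      have hxnbR : ¬ (20 * dR x ≤ 19 * ℓ) := by
        intro hcon
        exact hxnb (Finset.mem_union_right _ (Finset.mem_filter.mpr
          ⟨Finset.mem_inter.mpr ⟨hxR, hxS⟩, hcon⟩))
      have hdeg : (A.induce S').deg x = ((A.L ∩ S').filter fun y => (y, x) ∈ A.E).card :=
        A.deg_induce_of_right S' hxR hxS'
      have hsub : (A.L ∩ S).filter (fun y => (y, x) ∈ A.E) ⊆
          ((A.L ∩ S').filter fun y => (y, x) ∈ A.E) ∪ bad := by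
        intro y hy
        rw [Finset.mem_filter, Finset.mem_inter] at hy
        by_cases hyb : y ∈ bad
        · exact Finset.mem_union_right _ hyb
        · exact Finset.mem_union_left _ (Finset.mem_filter.mpr
            ⟨Finset.mem_inter.mpr ⟨hy.1.1, Finset.mem_sdiff.mpr ⟨hy.1.2, hyb⟩⟩, hy.2⟩)
      have hdrop : dR x ≤ (A.induce S').deg x + bad.card := by
        rw [hdeg]
        calc dR x ≤ (((A.L ∩ S').filter fun y => (y, x) ∈ A.E) ∪ bad).card :=
              Finset.card_le_card hsub
          _ ≤ _ := Finset.card_union_le _ _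
      have hd1 : (19:ℝ) * Lr < 20 * dR x := by
        rw [hLr_def]; exact_mod_cast Nat.lt_of_not_le hxnbR
      have hd2 : (dR x : ℝ) ≤ ((A.induce S').deg x : ℝ) + bad.card := by
        exact_mod_cast hdrop
      rw [← hLr_def, h09]
      linarith
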